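/- For every natural number i > 0, ∫_0^{1/(3^i-1)} f(t) dt = (2^(i-1) / 9^i) · ((3^i + 1) / (3^i - 1)) · (1 / (1 + 2^(i-1)/9^i)). -/

import Mathlib

open intervalIntegral Set

open MeasureTheory
set_option maxHeartbeats 1000000

theorem bourbaki_stmt (f : ℝ → ℝ)
    (hcont : ContinuousOn f (Set.Icc 0 1))
    (h0 : f 0 = 0) (h1 : f 1 = 1)
    (hw1 : ∀ x ∈ Set.Icc (0:ℝ) 1, f (x / 3) = (2/3) * f x)
    (hw2 : ∀ x ∈ Set.Icc (0:ℝ) 1, f ((2 - x) / 3) = (1/3) * (1 + f x))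
    (hw3 : ∀ x ∈ Set.Icc (0:ℝ) 1, f ((2 + x) / 3) = 1/3 + (2/3) * f x) :
    ∀ i : ℕ, 0 < i → ∫ t in (0:ℝ)..(1 / (3 ^ i - 1)), f t = (2 ^ (i - 1) / 9 ^ i) * ((3 ^ i + 1) / (3 ^ i - 1)) * (1 / (1 + 2 ^ (i - 1) / 9 ^ i)) := by
  have hInt : ∀ a b : ℝ, a ∈ Icc (0:ℝ) 1 → b ∈ Icc (0:ℝ) 1 → IntervalIntegrable f volume a b :=
    fun a b ha hb => (hcont.mono (uIcc_subset_Icc ha hb)).intervalIntegrable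
  -- substitution lemma for the left map
  have L1 : ∀ c ∈ Icc (0:ℝ) 1, (∫ t in (0:ℝ)..(c/3), f t) = (2/9) * ∫ t in (0:ℝ)..c, f t := by
    intro c hc
    have h1 : (∫ x in (0:ℝ)..c, f (x/3)) = (3:ℝ) • ∫ x in ((0:ℝ)/3)..(c/3), f x :=
      integral_comp_div f (by norm_num)
    have h2 : (∫ x in (0:ℝ)..c, f (x/3)) = ∫ x in (0:ℝ)..c, (2/3) * f x := by
      apply integral_congr
      intro x hx
      exact hw1 x (uIcc_subset_Icc (by norm_num) hc hx)
    rw [h2, intervalIntegral.integral_const_mul] at h1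
    simp only [zero_div, smul_eq_mul] at h1
    linarith
  -- substitution lemma for the middle map
  have L2 : ∀ c ∈ Icc (0:ℝ) 1, (∫ t in (1/3:ℝ)..((2-c)/3), f t)
      = (1/9)*(1-c) + (1/9) * ∫ x in c..(1:ℝ), f x := by
    intro c hc
    have h1 : (∫ x in c..(1:ℝ), f ((-(1/3))*x + 2/3))
        = (-(1/3):ℝ)⁻¹ • ∫ t in ((-(1/3))*c + 2/3)..((-(1/3))*1 + 2/3), f t :=
      integral_comp_mul_add f (by norm_num) _
    have e1 : ∀ x:ℝ, (-(1/3))*x + 2/3 = (2-x)/3 := by intro x; ring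
    simp only [e1] at h1
    norm_num at h1
    have h2 : (∫ x in c..(1:ℝ), f ((2-x)/3)) = ∫ x in c..(1:ℝ), ((1/3) * (1 + f x)) := by
      apply integral_congr
      intro x hx
      exact hw2 x (uIcc_subset_Icc hc (by norm_num) hx)
    rw [h2] at h1
    rw [intervalIntegral.integral_const_mul] at h1
    rw [intervalIntegral.integral_add intervalIntegrable_const
      (hInt c 1 hc (by norm_num))] at h1
    rw [intervalIntegral.integral_symm (1/3) ((2-c)/3)] at h1
    simp only [smul_eq_mul, intervalIntegral.integral_const] at h1
    linarith
  -- substitution lemma for the right map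
  have L3 : ∀ c ∈ Icc (0:ℝ) 1, (∫ t in ((2+c)/3)..(1:ℝ), f t)
      = (1/9)*(1-c) + (2/9) * ∫ x in c..(1:ℝ), f x := by
    intro c hc
    have h1 : (∫ x in c..(1:ℝ), f ((1/3)*x + 2/3))
        = ((1/3):ℝ)⁻¹ • ∫ t in ((1/3)*c + 2/3)..((1/3)*1 + 2/3), f t :=
      integral_comp_mul_add f (by norm_num) _
    have e1 : ∀ x:ℝ, (1/3:ℝ)*x + 2/3 = (2+x)/3 := by intro x; ring
    simp only [e1] at h1
    norm_num at h1
    have h2 : (∫ x in c..(1:ℝ), f ((2+x)/3)) = ∫ x in c..(1:ℝ), (1/3 + (2/3) * f x) := by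
      apply integral_congr
      intro x hx
      exact hw3 x (uIcc_subset_Icc hc (by norm_num) hx)
    rw [h2] at h1
    rw [intervalIntegral.integral_add intervalIntegrable_const
      ((hInt c 1 hc (by norm_num)).const_mul _)] at h1
    rw [intervalIntegral.integral_const_mul] at h1
    simp only [smul_eq_mul, intervalIntegral.integral_const] at h1
    linarith
  -- total integral
  have hA : (∫ t in (0:ℝ)..(1:ℝ), f t) = 1/2 := by
    have s1 := integral_add_adjacent_intervals
      (hInt 0 (1/3) (by norm_num) (by norm_num)) (hInt (1/3) (2/3) (by norm_num) (by norm_num))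
    have s2 := integral_add_adjacent_intervals
      (hInt 0 (2/3) (by norm_num) (by norm_num)) (hInt (2/3) 1 (by norm_num) (by norm_num))
    have m1 := L1 1 (by norm_num)
    have m2 := L2 0 (by norm_num)
    have m3 := L3 0 (by norm_num)
    norm_num at m1 m2 m3
    linarith
  -- one-step tail identity
  have Tstep : ∀ c ∈ Icc (0:ℝ) 1, (∫ t in (1 - c/3)..(1:ℝ), f t)
      = c/9 + (2/9) * ∫ t in (1-c)..(1:ℝ), f t := by
    intro c hc
    have h := L3 (1-c) ⟨by linarith [hc.2], by linarith [hc.1]⟩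
    have e : ((2:ℝ)+(1-c))/3 = 1 - c/3 := by ring
    rw [e] at h
    rw [h]; ring
  -- iterated scaling at 0
  have Iscale : ∀ n : ℕ, ∀ c ∈ Icc (0:ℝ) 1,
      (∫ t in (0:ℝ)..(c/3^n), f t) = (2/9)^n * ∫ t in (0:ℝ)..c, f t := by
    intro n
    induction n with
    | zero => intro c hc; norm_num
    | succ n ih =>
      intro c hc
      have hc3 : c/3 ∈ Icc (0:ℝ) 1 := ⟨by linarith [hc.1], by linarith [hc.2]⟩
      have e : c/3^(n+1) = (c/3)/3^n := by rw [pow_succ]; ring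
      rw [e, ih (c/3) hc3, L1 c hc, pow_succ]; ring
  -- iterated tail identity
  have Ttail : ∀ n : ℕ, ∀ c ∈ Icc (0:ℝ) 1,
      (∫ t in (1 - c/3^n)..(1:ℝ), f t)
        = (c/3^n)*(1-(2/3)^n) + (2/9)^n * ∫ t in (1-c)..(1:ℝ), f t := by
    intro n
    induction n with
    | zero => intro c hc; norm_num
    | succ n ih =>
      intro c hc
      have hc3 : c/3 ∈ Icc (0:ℝ) 1 := ⟨by linarith [hc.1], by linarith [hc.2]⟩
      have e : c/3^(n+1) = (c/3)/3^n := by rw [pow_succ]; ring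
      rw [e, ih (c/3) hc3, Tstep c hc]
      have h3 : ((3:ℝ))^n ≠ 0 := by positivity
      have p1 : ((2:ℝ)/9)^n = 2^n/(3^n*3^n) := by
        rw [div_pow]; congr 1; rw [← mul_pow]; norm_num
      have p2 : ((2:ℝ)/3)^n = 2^n/3^n := by rw [div_pow]
      simp only [pow_succ, p1, p2]
      field_simp
      ring
  -- main computation
  intro i hi
  obtain ⟨n, rfl⟩ : ∃ n, i = n + 1 := ⟨i - 1, (Nat.succ_pred_eq_of_pos hi).symm⟩
  have hX0 : (0:ℝ) < 3^n := by positivity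
  have hX1 : (1:ℝ) ≤ (3:ℝ)^n := one_le_pow₀ (by norm_num)
  have hY1 : (1:ℝ) ≤ (2:ℝ)^n := one_le_pow₀ (by norm_num)
  have hYX : (2:ℝ)^n ≤ (3:ℝ)^n := pow_le_pow_left₀ (by norm_num) (by norm_num) n
  set X : ℝ := 3^n with hXdef
  set Y : ℝ := 2^n with hYdef
  have hd : (0:ℝ) < X*3 - 1 := by nlinarith
  set a : ℝ := 1/(X*3 - 1) with hadef
  set b : ℝ := X/(X*3 - 1) with hbdef
  have ha2 : a ≤ 1/2 := by rw [hadef]; rw [div_le_iff₀ hd]; nlinarith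
  have ha0 : 0 < a := by positivity
  have hamem : a ∈ Icc (0:ℝ) 1 := ⟨le_of_lt ha0, by linarith⟩
  have hb2 : b ≤ 1/2 := by rw [hbdef]; rw [div_le_iff₀ hd]; nlinarith
  have hb0 : 0 < b := by positivity
  have hbmem : b ∈ Icc (0:ℝ) 1 := ⟨le_of_lt hb0, by linarith⟩
  have h1amem : 1 - a ∈ Icc (0:ℝ) 1 := ⟨by linarith, by linarith⟩
  have h1bmem : 1 - b ∈ Icc (0:ℝ) 1 := ⟨by linarith, by linarith⟩
  have hba : b/3^n = a := by
    rw [hbdef, hadef, ← hXdef]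
    field_simp
  have hbmap : (2-(1-a))/3 = b := by
    rw [hadef, hbdef]; field_simp; ring
  have h1bmap : (2-a)/3 = 1 - b := by
    rw [hadef, hbdef]; field_simp; ring
  -- notation
  set J : ℝ := ∫ t in (0:ℝ)..a, f t with hJdef
  set K : ℝ := ∫ t in (1-a)..(1:ℝ), f t with hKdef
  set Tb : ℝ := ∫ t in (1-b)..(1:ℝ), f t with hTbdef
  set Ib : ℝ := ∫ t in (0:ℝ)..b, f t with hIbdef
  -- J = (2/9)^n * Ib
  have hJ : J = (2/9)^n * Ib := by
    have h := Iscale n b hbmem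
    rw [hba] at h
    exact h
  -- Ib = 1/9 + a/9 + K/9
  have hIb : Ib = 1/9 + a/9 + K/9 := by
    have s1 := integral_add_adjacent_intervals
      (hInt 0 (1/3) (by norm_num) (by norm_num)) (hInt (1/3) b (by norm_num) hbmem)
    have m1 := L1 1 (by norm_num)
    have m2 := L2 (1-a) h1amem
    rw [hbmap] at m2
    have e2 : (1:ℝ) - (1-a) = a := by ring
    rw [e2] at m2
    norm_num at m1
    rw [hA] at m1
    linarith [s1, m1, m2, hIbdef, hKdef]
  -- K = a*(1-(2/3)^n) + (2/9)^n * Tb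
  have hK : K = a*(1-(2/3)^n) + (2/9)^n * Tb := by
    have h := Ttail n b hbmem
    rw [hba] at h
    exact h
  -- Tb = (a+J)/9 + 2/9
  have hTb : Tb = (a+J)/9 + 2/9 := by
    have s1 := integral_add_adjacent_intervals
      (hInt (1-b) (2/3) h1bmem (by norm_num)) (hInt (2/3) 1 (by norm_num) (by norm_num))
    have s2 := integral_add_adjacent_intervals
      (hInt (1/3) (1-b) (by norm_num) h1bmem) (hInt (1-b) (2/3) h1bmem (by norm_num))
    have s3 := integral_add_adjacent_intervals
      (hInt 0 a (by norm_num) hamem) (hInt a 1 hamem (by norm_num))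
    have m3 := L3 0 (by norm_num)
    have m2 := L2 0 (by norm_num)
    have mb := L2 a hamem
    rw [h1bmap] at mb
    norm_num at m3 m2
    rw [hA] at m3 m2
    linarith [s1, s2, s3, m3, m2, mb, hA, hTbdef, hKdef, hJdef]
  -- put everything together
  have p1 : ((2:ℝ)/9)^n = Y/(X*X) := by
    rw [hYdef, hXdef, div_pow]; congr 1; rw [← mul_pow]; norm_num
  have p2 : ((2:ℝ)/3)^n = Y/X := by rw [hYdef, hXdef, div_pow]
  have p9 : ((9:ℝ))^(n) = X*X := by rw [hXdef, ← mul_pow]; norm_num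
  rw [hIb] at hJ
  rw [hTb] at hK
  rw [hK] at hJ
  rw [p1, p2, hadef] at hJ
  have hXne : X ≠ 0 := ne_of_gt hX0
  have hdne : X*3 - 1 ≠ 0 := ne_of_gt hd
  have hden : (9:ℝ)*(X*X)+Y ≠ 0 := by positivity
  have hden2 : (9:ℝ)*(X*X) - Y ≠ 0 := ne_of_gt (by nlinarith [hYX, hX1])
  show (∫ t in (0:ℝ)..(1 / (3 ^ (n+1) - 1)), f t) = _
  have ebound : (1:ℝ) / (3 ^ (n+1) - 1) = a := by
    rw [hadef, pow_succ, ← hXdef]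
  have e9 : (9:ℝ)^(n+1) = 9*(X*X) := by rw [pow_succ, p9]; ring
  have e3 : (3:ℝ)^(n+1) = X*3 := by rw [pow_succ, hXdef]
  have e2 : (2:ℝ)^(n+1-1) = Y := by simp [hYdef]
  rw [ebound, ← hJdef, e9, e3, e2]
  clear hIb hTb hK p1 p2 p9 hba hbmap h1bmap hamem hbmem h1amem h1bmem ha0 hb0 ha2 hb2
    hInt L1 L2 L3 hA Tstep Iscale Ttail hcont hw1 hw2 hw3 h0 h1 ebound e9 e3 e2 hi
  clear_value Ib Tb K J b a Y X
  clear hIbdef hTbdef hKdef hJdef hadef hbdef hXdef hYdef Ib Tb K b a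
  field_simp at hJ ⊢
  have h9 : (0:ℝ) < 9*(X*X) - Y := by nlinarith [hYX, hX1]
  have hbig : (0:ℝ) < 81*X*(X*3-1)^2*(9*(X*X)-Y) :=
    mul_pos (mul_pos (mul_pos (by norm_num : (0:ℝ) < 81) hX0) (pow_pos hd 2)) h9
  have key : (81*X*(X*3-1)^2*(9*(X*X)-Y)) * (J*((X*3-1)*(9*(X*X)+Y)))
      = (81*X*(X*3-1)^2*(9*(X*X)-Y)) * (Y*(X*3+1)) := by linear_combination (81*X*(X*3-1)^2) * hJ
  have hJval : J*((X*3-1)*(9*(X*X)+Y)) = Y*(X*3+1) := mul_left_cancel₀ (ne_of_gt hbig) key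
  linear_combination hJval
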